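/- In ℚ(q)[X], for r ≥ m ≥ 0, s ≥ m, and max(r,s) ≤ j ≤ r+s−m, the coefficient c_{r,s}^{m,j} := θ_{r+s−j}(q^r)·θ_{r+s−j}(q^s) / (q^{(r+s−j−m)m}·θ_{r+s−j−m}(q^{r+s−j−m})·θ_m(q^r)·θ_m(q^s)) satisfies θ_r(X)·θ_s(X) = θ_m(X)·Σ_{j=max(r,s)}^{r+s−m} c_{r,s}^{m,j}·θ_j(X), where θ_n(X) = ∏_{k=0}^{n-1}(X − q^k). -/

import Mathlib

open Polynomial Finset

/-- `θ_n(X) = ∏_{k=0}^{n-1} (X - q^k)` as a polynomial. -/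
noncomputable def theta {K : Type*} [Field K] (q : K) (n : ℕ) : Polynomial K :=
  ∏ k ∈ range n, (X - C (q ^ k))

/-- `θ_n(x) = ∏_{k=0}^{n-1} (x - q^k)`. -/
noncomputable def thetaEval {K : Type*} [Field K] (q x : K) (n : ℕ) : K :=
  ∏ k ∈ range n, (x - q ^ k)

section aux

variable {K : Type*} [Field K] (q : K)

lemma thetaEval_zero (x : K) : thetaEval q x 0 = 1 := by simp [thetaEval]

lemma thetaEval_succ (x : K) (n : ℕ) :
    thetaEval q x (n + 1) = thetaEval q x n * (x - q ^ n) :=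
  Finset.prod_range_succ _ _

lemma theta_succ (n : ℕ) : theta q (n + 1) = theta q n * (X - C (q ^ n)) :=
  Finset.prod_range_succ _ _

lemma thetaEval_shift (t n : ℕ) :
    thetaEval q (q ^ (t + 1)) (n + 1) =
      (q ^ (t + 1) - 1) * (q ^ n * thetaEval q (q ^ t) n) := by
  unfold thetaEval
  rw [Finset.prod_range_succ']
  have h : ∀ k, q ^ (t + 1) - q ^ (k + 1) = q * (q ^ t - q ^ k) := by
    intro k; ring
  simp_rw [h, Finset.prod_mul_distrib, Finset.prod_const, Finset.card_range]
  ring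

lemma thetaEval_pow_eq_zero {t n : ℕ} (h : t < n) : thetaEval q (q ^ t) n = 0 :=
  Finset.prod_eq_zero (Finset.mem_range.2 h) (by simp)

variable {q}

lemma thetaEval_pow_ne_zero (hpow : ∀ a b : ℕ, a ≠ b → q ^ a ≠ q ^ b)
    {t n : ℕ} (h : n ≤ t) : thetaEval q (q ^ t) n ≠ 0 := by
  unfold thetaEval
  refine Finset.prod_ne_zero_iff.2 fun k hk => sub_ne_zero.2 ?_
  exact hpow t k (by have := Finset.mem_range.1 hk; omega)

/-- The coefficient `c_{r,s}^{m,i}` (indexed by `i = r+s-j`). -/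
noncomputable def coefC (q : K) (m r s i : ℕ) : K :=
  thetaEval q (q ^ r) i * thetaEval q (q ^ s) i /
    (q ^ ((i - m) * m) * thetaEval q (q ^ (i - m)) (i - m) *
      thetaEval q (q ^ r) m * thetaEval q (q ^ s) m)

lemma coefC_self (hpow : ∀ a b : ℕ, a ≠ b → q ^ a ≠ q ^ b)
    {m r s : ℕ} (hr : m ≤ r) (hs : m ≤ s) : coefC q m r s m = 1 := by
  unfold coefC
  rw [Nat.sub_self]
  simp only [Nat.zero_mul, pow_zero, thetaEval_zero, one_mul]
  rw [div_self]
  exact mul_ne_zero (thetaEval_pow_ne_zero hpow hr) (thetaEval_pow_ne_zero hpow hs)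

end aux
section key
variable {K : Type*} [Field K] {q : K}

lemma key (hq0 : q ≠ 0) (hpow : ∀ a b : ℕ, a ≠ b → q ^ a ≠ q ^ b) (m d e f : ℕ) :
    coefC q m (m + d + 1 + e) (m + f + 1) (m + d + 1) =
      coefC q m (m + d + 1 + e) (m + f) (m + d + 1) +
        (q ^ (m + f + 1 + e) - q ^ (m + f)) * coefC q m (m + d + 1 + e) (m + f) (m + d) := by
  have h1 : m + d + 1 - m = d + 1 := by omega
  have h2 : m + d - m = d := by omega
  have hd1 : q ^ (d + 1) - 1 ≠ 0 := by
    have := hpow (d + 1) 0 (by omega); simpa [sub_ne_zero] using this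
  have hdd : thetaEval q (q ^ d) d ≠ 0 := thetaEval_pow_ne_zero hpow le_rfl
  have hmr : thetaEval q (q ^ (m + d + 1 + e)) m ≠ 0 :=
    thetaEval_pow_ne_zero hpow (by omega)
  unfold coefC
  rw [h1, h2, thetaEval_shift q d d,
    thetaEval_succ q (q ^ (m + d + 1 + e)) (m + d),
    thetaEval_succ q (q ^ (m + f)) (m + d),
    show ((m + f + 1 : ℕ)) = (m + f) + 1 from rfl,
    thetaEval_shift q (m + f) (m + d)]
  rcases m with _ | m'
  · simp only [Nat.zero_add] at *
    simp only [thetaEval_zero, mul_one]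
    have hD : q ^ ((d + 1) * 0) * ((q ^ (d + 1) - 1) * (q ^ d * thetaEval q (q ^ d) d)) ≠ 0 := by
      apply_rules [mul_ne_zero, pow_ne_zero]
    have hD3 : q ^ (d * 0) * thetaEval q (q ^ d) d ≠ 0 := by
      apply_rules [mul_ne_zero, pow_ne_zero]
    rw [← mul_div_assoc, div_add_div _ _ hD hD3, div_eq_div_iff hD (mul_ne_zero hD hD3)]
    ring
  · have hs1 : q ^ (m' + 1 + f + 1) - 1 ≠ 0 := by
      have := hpow (m' + 1 + f + 1) 0 (by omega); simpa [sub_ne_zero] using this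
    have hms : thetaEval q (q ^ (m' + 1 + f)) m' ≠ 0 :=
      thetaEval_pow_ne_zero hpow (by omega)
    have hsub : q ^ (m' + 1 + f) - q ^ m' ≠ 0 :=
      sub_ne_zero.2 (hpow _ _ (by omega))
    rw [thetaEval_shift q (m' + 1 + f) m',
      thetaEval_succ q (q ^ (m' + 1 + f)) m']
    have hDL : q ^ ((d + 1) * (m' + 1)) * ((q ^ (d + 1) - 1) * (q ^ d * thetaEval q (q ^ d) d)) *
        thetaEval q (q ^ (m' + 1 + d + 1 + e)) (m' + 1) *
        ((q ^ (m' + 1 + f + 1) - 1) * (q ^ m' * thetaEval q (q ^ (m' + 1 + f)) m')) ≠ 0 := by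
      apply_rules [mul_ne_zero, pow_ne_zero]
    have hD2 : q ^ ((d + 1) * (m' + 1)) * ((q ^ (d + 1) - 1) * (q ^ d * thetaEval q (q ^ d) d)) *
        thetaEval q (q ^ (m' + 1 + d + 1 + e)) (m' + 1) *
        (thetaEval q (q ^ (m' + 1 + f)) m' * (q ^ (m' + 1 + f) - q ^ m')) ≠ 0 := by
      apply_rules [mul_ne_zero, pow_ne_zero]
    have hD3 : q ^ (d * (m' + 1)) * thetaEval q (q ^ d) d *
        thetaEval q (q ^ (m' + 1 + d + 1 + e)) (m' + 1) *
        (thetaEval q (q ^ (m' + 1 + f)) m' * (q ^ (m' + 1 + f) - q ^ m')) ≠ 0 := by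
      apply_rules [mul_ne_zero, pow_ne_zero]
    rw [← mul_div_assoc, div_add_div _ _ hD2 hD3, div_eq_div_iff hDL (mul_ne_zero hD2 hD3)]
    ring
end key
section main
variable {K : Type*} [Field K] {q : K}

lemma main_ind (hq0 : q ≠ 0) (hpow : ∀ a b : ℕ, a ≠ b → q ^ a ≠ q ^ b)
    {m r : ℕ} (hr : m ≤ r) (f : ℕ) :
    theta q r * theta q (m + f) =
      theta q m * ∑ i ∈ Icc m r,
        C (coefC q m r (m + f) i) * theta q (r + (m + f) - i) := by
  induction f with
  | zero =>
    simp only [Nat.add_zero]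
    rw [Finset.sum_eq_single m]
    · rw [coefC_self hpow hr le_rfl, map_one, one_mul,
        show r + m - m = r from by omega, mul_comm]
    · intro b hb hbm
      have hb' : m < b := by
        rw [mem_Icc] at hb; omega
      have hz : coefC q m r m b = 0 := by
        unfold coefC
        rw [thetaEval_pow_eq_zero q hb']
        simp
      rw [hz, map_zero, zero_mul]
    · intro h; exact absurd (mem_Icc.2 ⟨le_rfl, hr⟩) h
  | succ f IH =>
    rw [show m + (f + 1) = (m + f) + 1 from by omega, theta_succ, ← mul_assoc, IH, mul_assoc]
    congr 1
    rw [Finset.sum_mul, ← sub_eq_zero, ← Finset.sum_sub_distrib, ← Finset.Ico_add_one_right_eq_Icc,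
      Finset.sum_Ico_eq_sum_range, show r + 1 - m = (r - m) + 1 from by omega,
      Finset.sum_range_succ']
    set F : ℕ → Polynomial K := fun i =>
      C (coefC q m r (m + f) i * (q ^ (r + (m + f) - i) - q ^ (m + f))) *
        theta q (r + (m + f) - i) with hF
    have h0 : C (coefC q m r (m + f) (m + 0)) * theta q (r + (m + f) - (m + 0)) *
        (X - C (q ^ (m + f))) -
        C (coefC q m r (m + f + 1) (m + 0)) * theta q (r + (m + f + 1) - (m + 0)) = F m := by
      simp only [Nat.add_zero, hF]
      rw [coefC_self hpow hr (by omega), coefC_self hpow hr (by omega),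
        show r + (m + f + 1) - m = (r + (m + f) - m) + 1 from by omega,
        theta_succ q (r + (m + f) - m)]
      simp only [map_one, one_mul, map_sub, map_mul, map_pow]
      ring
    have hmain : ∀ j ∈ range (r - m),
        C (coefC q m r (m + f) (m + (j + 1))) * theta q (r + (m + f) - (m + (j + 1))) *
          (X - C (q ^ (m + f))) -
          C (coefC q m r (m + f + 1) (m + (j + 1))) *
            theta q (r + (m + f + 1) - (m + (j + 1)))
        = F (m + (j + 1)) - F (m + j) := by
      intro j hj
      have hj' : j < r - m := mem_range.1 hj
      obtain ⟨e, he⟩ : ∃ e, r = m + j + 1 + e := ⟨r - (m + j + 1), by omega⟩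
      subst he
      simp only [hF]
      rw [show m + (j + 1) = m + j + 1 from by omega,
        show m + j + 1 + e + (m + f) - (m + j + 1) = m + f + e from by omega,
        show m + j + 1 + e + (m + f + 1) - (m + j + 1) = (m + f + e) + 1 from by omega,
        show m + j + 1 + e + (m + f) - (m + j) = (m + f + e) + 1 from by omega,
        key hq0 hpow m j e f, theta_succ q (m + f + e)]
      simp only [map_add, map_sub, map_mul, map_pow]
      rw [show (m + f + 1 + e : ℕ) = (m + f + e) + 1 from by omega]
      simp only [pow_succ]
      ring
    rw [Finset.sum_congr rfl hmain, h0, Finset.sum_range_sub (fun j => F (m + j))]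
    have hFr : F (m + (r - m)) = 0 := by
      simp only [hF, show m + (r - m) = r from by omega,
        show r + (m + f) - r = m + f from by omega, sub_self, mul_zero, map_zero, zero_mul]
    rw [hFr]
    simp

end main
/-- For `r ≥ m`, `s ≥ m`:
`θ_r(X)·θ_s(X) = θ_m(X)·Σ_{j=max(r,s)}^{r+s−m} c_{r,s}^{m,j}·θ_j(X)` where
`c_{r,s}^{m,j} = θ_{r+s−j}(q^r)·θ_{r+s−j}(q^s)
  / (q^{(r+s−j−m)m}·θ_{r+s−j−m}(q^{r+s−j−m})·θ_m(q^r)·θ_m(q^s))`. -/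
theorem stmt17 {K : Type*} [Field K] [Algebra ℚ K] (q : K)
    (hq : Transcendental ℚ q) (m r s : ℕ) (hr : m ≤ r) (hs : m ≤ s) :
    theta q r * theta q s =
      theta q m * ∑ j ∈ Finset.Icc (max r s) (r + s - m),
        C (thetaEval q (q ^ r) (r + s - j) * thetaEval q (q ^ s) (r + s - j) /
            (q ^ ((r + s - j - m) * m) *
              thetaEval q (q ^ (r + s - j - m)) (r + s - j - m) *
              thetaEval q (q ^ r) m * thetaEval q (q ^ s) m)) *
          theta q j := by
  have hq0 : q ≠ 0 := fun h => hq (h ▸ isAlgebraic_zero)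
  have hpow : ∀ a b : ℕ, a ≠ b → q ^ a ≠ q ^ b := by
    intro a b hab h
    apply hq
    refine ⟨Polynomial.X ^ a - Polynomial.X ^ b,
      sub_ne_zero.2 fun hXX => hab ?_, ?_⟩
    · simpa using congrArg natDegree hXX
    · simp [h]
  obtain ⟨f, rfl⟩ := Nat.exists_eq_add_of_le hs
  rw [main_ind hq0 hpow hr f]
  congr 1
  have hss : Icc m (min r (m + f)) ⊆ Icc m r :=
    Finset.Icc_subset_Icc_right (min_le_left r (m + f))
  have hzz : ∀ i ∈ Icc m r, i ∉ Icc m (min r (m + f)) →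
      C (coefC q m r (m + f) i) * theta q (r + (m + f) - i) = 0 := by
    intro i hi hni
    rw [mem_Icc] at hi
    have hfi : m + f < i := by
      rw [mem_Icc] at hni; omega
    have hz : coefC q m r (m + f) i = 0 := by
      unfold coefC
      rw [thetaEval_pow_eq_zero q hfi]
      simp
    rw [hz, map_zero, zero_mul]
  rw [← Finset.sum_subset hss hzz]
  refine Finset.sum_nbij' (fun a => r + (m + f) - a) (fun b => r + (m + f) - b)
    ?_ ?_ ?_ ?_ ?_
  · intro a ha; simp only [mem_Icc] at ha ⊢; omega
  · intro b hb; simp only [mem_Icc] at hb ⊢; omega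
  · intro a ha; simp only [mem_Icc] at ha; omega
  · intro b hb; simp only [mem_Icc] at hb; omega
  · intro a ha
    simp only [mem_Icc] at ha
    rw [show r + (m + f) - (r + (m + f) - a) = a from by omega]
    rfl
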